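/- Edge P-colorability of the doubly directed version: Let G₀ be a simple graph on a finite vertex set V, and let G₂ be its doubly directed version, the digraph with G₂ u v iff u and v are adjacent in G₀. Let P be a finite poset. Then the 2-walks (edges) of G₂ admit a P-coloring if and only if the chromatic number of G₀ is at most the maximum size of an antichain in A(P), the poset of lower sets of P ordered by inclusion. -/

import Mathlib

/-- A `k`-walk in the digraph `G` is a function `w : Fin k → V` such that
consecutive vertices are joined by an edge of `G`. -/
def IsWalk {V : Type*} (G : V → V → Prop) {k : ℕ} (w : Fin k → V) : Prop :=
  ∀ i : ℕ, ∀ h : i + 1 < k, G (w ⟨i, Nat.lt_of_succ_lt h⟩) (w ⟨i + 1, h⟩)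

theorem IsWalk.walkPrefix {V : Type*} {G : V → V → Prop} {k : ℕ} {u : Fin (k + 1) → V}
    (hu : IsWalk G u) : IsWalk G (fun i : Fin k => u i.castSucc) := by
  intro i h
  exact hu i (by omega)

theorem IsWalk.walkSuffix {V : Type*} {G : V → V → Prop} {k : ℕ} {u : Fin (k + 1) → V}
    (hu : IsWalk G u) : IsWalk G (fun i : Fin k => u i.succ) := by
  intro i h
  exact hu (i + 1) (by omega)

/-- The `k`-walks of `G`, as a subtype. -/
def Walks {V : Type*} (G : V → V → Prop) (k : ℕ) : Type _ :=
  {w : Fin k → V // IsWalk G w}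

/-- A `P`-coloring of the `k`-walks of `G`: for every `(k+1)`-walk `u`,
the color of its prefix `k`-walk is not `≤` the color of its suffix `k`-walk. -/
def IsPColoring {V : Type*} {P : Type*} [Preorder P] (G : V → V → Prop) (k : ℕ)
    (c : Walks G k → P) : Prop :=
  ∀ u : Walks G (k + 1),
    ¬ c ⟨fun i => u.1 i.castSucc, u.2.walkPrefix⟩ ≤ c ⟨fun i => u.1 i.succ, u.2.walkSuffix⟩

/-- The width (Dilworth number) of a poset `Q`: the maximum size of an antichain. -/
noncomputable def posetWidth (Q : Type*) [Preorder Q] : ℕ :=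
  sSup {n : ℕ | ∃ s : Finset Q, IsAntichain (· ≤ ·) (s : Set Q) ∧ s.card = n}

section Dilworth

variable {Q : Type*} [PartialOrder Q]

/-- The width of a finset in a poset: max size of an antichain contained in it. -/
noncomputable def wdth (s : Finset Q) : ℕ :=
  sSup {n : ℕ | ∃ t : Finset Q, t ⊆ s ∧ IsAntichain (· ≤ ·) (t : Set Q) ∧ t.card = n}

lemma wdth_bddAbove (s : Finset Q) :
    BddAbove {n : ℕ | ∃ t : Finset Q, t ⊆ s ∧ IsAntichain (· ≤ ·) (t : Set Q) ∧ t.card = n} :=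
  ⟨s.card, fun n ⟨t, ht, _, hc⟩ => hc ▸ Finset.card_le_card ht⟩

lemma wdth_set_nonempty (s : Finset Q) :
    {n : ℕ | ∃ t : Finset Q, t ⊆ s ∧ IsAntichain (· ≤ ·) (t : Set Q) ∧ t.card = n}.Nonempty :=
  ⟨0, ∅, by simp, by simp [IsAntichain], rfl⟩

lemma exists_wdth_antichain (s : Finset Q) :
    ∃ t : Finset Q, t ⊆ s ∧ IsAntichain (· ≤ ·) (t : Set Q) ∧ t.card = wdth s :=
  Nat.sSup_mem (wdth_set_nonempty s) (wdth_bddAbove s)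

lemma le_wdth {s t : Finset Q} (ht : t ⊆ s) (hac : IsAntichain (· ≤ ·) (t : Set Q)) :
    t.card ≤ wdth s :=
  le_csSup (wdth_bddAbove s) ⟨t, ht, hac, rfl⟩

lemma wdth_mono {s s' : Finset Q} (h : s ⊆ s') : wdth s ≤ wdth s' :=
  csSup_le_csSup (wdth_bddAbove s') (wdth_set_nonempty s)
    (fun n ⟨t, ht, h1, h2⟩ => ⟨t, ht.trans h, h1, h2⟩)

/-- Dilworth's theorem (cover form): a finite set in a poset can be covered by
pairwise disjoint chains, at most `wdth s` many. -/
theorem dilworth_aux : ∀ (n : ℕ) (s : Finset Q), s.card ≤ n →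
    ∃ c : Finset (Finset Q), c.card ≤ wdth s ∧
      (∀ t ∈ c, t ⊆ s ∧ IsChain (· ≤ ·) (t : Set Q)) ∧
      (∀ x ∈ s, ∃ t ∈ c, x ∈ t) ∧
      (∀ t ∈ c, ∀ t' ∈ c, t ≠ t' → Disjoint t t') := by
  intro n
  induction n with
  | zero =>
    intro s hs
    have : s = ∅ := Finset.card_eq_zero.mp (Nat.le_antisymm hs (Nat.zero_le _))
    subst this
    exact ⟨∅, by simp, by simp, by simp, by simp⟩
  | succ n ih =>
    intro s hs
    classical
    rcases s.eq_empty_or_nonempty with rfl | hsne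
    · exact ⟨∅, by simp, by simp, by simp, by simp⟩
    obtain ⟨a, ha, hamax⟩ := s.exists_maximal hsne
    set s' := s.erase a with hs'def
    have has' : a ∉ s' := Finset.notMem_erase a s
    have hs'sub : s' ⊆ s := Finset.erase_subset a s
    have hs'card : s'.card ≤ n := by
      rw [hs'def, Finset.card_erase_of_mem ha]; omega
    obtain ⟨c', hc'card, hc'chain, hc'cover, hc'disj⟩ := ih s' hs'card
    set d := wdth s' with hddef
    -- every maximum antichain of s' meets every chain of c'
    have hmeet : ∀ B : Finset Q, B ⊆ s' → IsAntichain (· ≤ ·) (B : Set Q) → B.card = d →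
        ∀ t ∈ c', ∃ x ∈ B, x ∈ t := by
      intro B hBs hBac hBcard t ht
      have hch : ∀ x ∈ B, ∃ u ∈ c', x ∈ u := fun x hx => hc'cover x (hBs hx)
      choose f hf1 hf2 using hch
      have hsurj := Finset.surj_on_of_inj_on_of_card_le
        (s := B) (t := c') f (fun x hx => hf1 x hx) ?_ (by omega)
      · obtain ⟨x, hx, hxeq⟩ := hsurj t ht
        exact ⟨x, hx, hxeq ▸ hf2 x hx⟩
      · intro x y hx hy heq
        by_contra hne
        have hchain := hc'chain _ (hf1 x hx)
        have hxy := hchain.2 (Finset.mem_coe.mpr (hf2 x hx))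
          (Finset.mem_coe.mpr (heq ▸ hf2 y hy)) hne
        rcases hxy with h | h
        · exact hBac (Finset.mem_coe.mpr hx) (Finset.mem_coe.mpr hy) hne h
        · exact hBac (Finset.mem_coe.mpr hy) (Finset.mem_coe.mpr hx) (Ne.symm hne) h
    -- pick in each chain the top element lying in some maximum antichain of s'
    have hgmax : ∀ t, t ∈ c' → ∃ x, x ∈ t ∧
        (∃ B : Finset Q, B ⊆ s' ∧ IsAntichain (· ≤ ·) (B : Set Q) ∧ B.card = d ∧ x ∈ B) ∧
        ∀ y ∈ t, (∃ B : Finset Q, B ⊆ s' ∧ IsAntichain (· ≤ ·) (B : Set Q) ∧ B.card = d ∧ y ∈ B)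
          → y ≤ x := by
      intro t ht
      obtain ⟨B, hB1, hB2, hB3⟩ := exists_wdth_antichain s'
      set M := t.filter (fun x =>
        ∃ B : Finset Q, B ⊆ s' ∧ IsAntichain (· ≤ ·) (B : Set Q) ∧ B.card = d ∧ x ∈ B) with hMdef
      have hMne : M.Nonempty := by
        obtain ⟨x, hxB, hxt⟩ := hmeet B hB1 hB2 hB3 t ht
        exact ⟨x, Finset.mem_filter.mpr ⟨hxt, ⟨B, hB1, hB2, hB3, hxB⟩⟩⟩
      obtain ⟨m, hmM, hmmax⟩ := M.exists_maximal hMne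
      refine ⟨m, (Finset.mem_filter.mp hmM).1, (Finset.mem_filter.mp hmM).2, ?_⟩
      intro y hy hPy
      have hyM : y ∈ M := Finset.mem_filter.mpr ⟨hy, hPy⟩
      rcases eq_or_ne y m with rfl | hne
      · exact le_refl _
      have := (hc'chain t ht).2 (Finset.mem_coe.mpr hy)
        (Finset.mem_coe.mpr (Finset.mem_filter.mp hmM).1) hne
      rcases this with h | h
      · exact h
      · exact absurd (le_antisymm (hmmax hyM h) h) hne
    haveI : Nonempty Q := ⟨a⟩
    choose! g hg1 hg2 hg3 using hgmax
    have hAs' : ∀ t ∈ c', g t ∈ s' := fun t ht => (hc'chain t ht).1 (hg1 t ht)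
    set A := c'.image g with hAdef
    have hAac : IsAntichain (· ≤ ·) (A : Set Q) := by
      rintro x hx y hy hne hle
      simp only [hAdef, Finset.coe_image, Set.mem_image, Finset.mem_coe] at hx hy
      obtain ⟨t, ht, rfl⟩ := hx
      obtain ⟨t', ht', rfl⟩ := hy
      obtain ⟨B', hB'1, hB'2, hB'3, hB'4⟩ := hg2 t' ht'
      obtain ⟨x, hxB', hxt⟩ := hmeet B' hB'1 hB'2 hB'3 t ht
      have hxle : x ≤ g t := hg3 t ht x hxt ⟨B', hB'1, hB'2, hB'3, hxB'⟩
      rcases eq_or_ne x (g t') with rfl | hxne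
      · exact hne (le_antisymm hle hxle)
      · exact hB'2 (Finset.mem_coe.mpr hxB') (Finset.mem_coe.mpr hB'4) hxne (hxle.trans hle)
    have hginj : Set.InjOn g c' := by
      intro t ht t' ht' heq
      by_contra hne
      exact (Finset.disjoint_left.mp (hc'disj t ht t' ht' hne) (hg1 t ht)) (heq ▸ hg1 t' ht')
    have hAcard : A.card = c'.card := Finset.card_image_of_injOn hginj
    by_cases hcase : ∃ t ∈ c', g t ≤ a
    · -- some chain's top can be extended by a
      obtain ⟨t0, ht0, hle0⟩ := hcase
      set K := insert a (t0.filter (fun x => x ≤ g t0)) with hKdef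
      have haK : a ∈ K := Finset.mem_insert_self _ _
      have hKchain : IsChain (· ≤ ·) (K : Set Q) := by
        intro x hx y hy hne
        simp only [hKdef, Finset.coe_insert, Set.mem_insert_iff, Finset.mem_coe,
          Finset.mem_filter] at hx hy
        rcases hx with rfl | ⟨hxt, hxle⟩
        · rcases hy with rfl | ⟨hyt, hyle⟩
          · exact absurd rfl hne
          · exact Or.inr (hyle.trans hle0)
        · rcases hy with rfl | ⟨hyt, hyle⟩
          · exact Or.inl (hxle.trans hle0)
          · exact (hc'chain t0 ht0).2 (Finset.mem_coe.mpr hxt) (Finset.mem_coe.mpr hyt) hne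
      have hKs : K ⊆ s := by
        rw [hKdef]
        exact Finset.insert_subset ha
          ((Finset.filter_subset _ _).trans ((hc'chain t0 ht0).1.trans hs'sub))
      have has'' : a ∉ s \ K := by simp [haK]
      have hsKcard : (s \ K).card ≤ n := by
        have hlt : s \ K ⊂ s :=
          (Finset.ssubset_iff_of_subset (Finset.sdiff_subset)).mpr ⟨a, ha, has''⟩
        have := Finset.card_lt_card hlt
        omega
      have hd1 : 1 ≤ d := by
        have : 0 < c'.card := Finset.card_pos.mpr ⟨t0, ht0⟩
        omega
      have hwdK : wdth (s \ K) ≤ d - 1 := by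
        apply csSup_le (wdth_set_nonempty _)
        rintro m ⟨B, hB1, hB2, hB3⟩
        have hBs' : B ⊆ s' := by
          intro x hx
          have hxs : x ∈ s := (Finset.sdiff_subset) (hB1 hx)
          have hxK : x ∉ K := (Finset.mem_sdiff.mp (hB1 hx)).2
          refine Finset.mem_erase.mpr ⟨?_, hxs⟩
          rintro rfl; exact hxK haK
        have hled : B.card ≤ d := le_wdth hBs' hB2
        rcases Nat.lt_or_ge B.card d with h | h
        · omega
        have hBd : B.card = d := le_antisymm hled h
        obtain ⟨x, hxB, hxt0⟩ := hmeet B hBs' hB2 hBd t0 ht0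
        have hxle : x ≤ g t0 := hg3 t0 ht0 x hxt0 ⟨B, hBs', hB2, hBd, hxB⟩
        have hxK : x ∈ K := Finset.mem_insert_of_mem (Finset.mem_filter.mpr ⟨hxt0, hxle⟩)
        exact absurd hxK (Finset.mem_sdiff.mp (hB1 hxB)).2
      obtain ⟨c'', hc''card, hc''chain, hc''cover, hc''disj⟩ := ih (s \ K) hsKcard
      have hKnot : K ∉ c'' := by
        intro h
        have := (hc''chain K h).1 haK
        exact (Finset.mem_sdiff.mp this).2 haK
      refine ⟨insert K c'', ?_, ?_, ?_, ?_⟩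
      · rw [Finset.card_insert_of_notMem hKnot]
        have hws : d ≤ wdth s := wdth_mono hs'sub
        omega
      · intro t ht
        rcases Finset.mem_insert.mp ht with rfl | ht
        · exact ⟨hKs, hKchain⟩
        · exact ⟨((hc''chain t ht).1).trans (Finset.sdiff_subset), (hc''chain t ht).2⟩
      · intro x hx
        by_cases hxK : x ∈ K
        · exact ⟨K, Finset.mem_insert_self _ _, hxK⟩
        · obtain ⟨t, ht, hxt⟩ := hc''cover x (Finset.mem_sdiff.mpr ⟨hx, hxK⟩)
          exact ⟨t, Finset.mem_insert_of_mem ht, hxt⟩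
      · intro t ht t' ht' hne
        rcases Finset.mem_insert.mp ht with rfl | ht
        · rcases Finset.mem_insert.mp ht' with rfl | ht'
          · exact absurd rfl hne
          · exact Finset.disjoint_left.mpr
              (fun x hxK hxt' => (Finset.mem_sdiff.mp ((hc''chain t' ht').1 hxt')).2 hxK)
        · rcases Finset.mem_insert.mp ht' with rfl | ht'
          · exact Finset.disjoint_left.mpr
              (fun x hxt hxK => (Finset.mem_sdiff.mp ((hc''chain t ht).1 hxt)).2 hxK)
          · exact hc''disj t ht t' ht' hne
    · -- a is incomparable with every g t : new antichain of size c'.card + 1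
      push_neg at hcase
      have hnac : ∀ t ∈ c', ¬ a ≤ g t := by
        intro t ht hle
        have hgt : g t ∈ s := hs'sub (hAs' t ht)
        have hne : a ≠ g t := by rintro rfl; exact has' (hAs' t ht)
        exact hne (le_antisymm hle (hamax hgt hle))
      have haA : a ∉ A := by
        intro h
        simp only [hAdef, Finset.mem_image] at h
        obtain ⟨t, ht, heq⟩ := h
        exact has' (heq ▸ hAs' t ht)
      have hiac : IsAntichain (· ≤ ·) ((insert a A : Finset Q) : Set Q) := by
        intro x hx y hy hne hle
        simp only [Finset.coe_insert, Set.mem_insert_iff, Finset.mem_coe] at hx hy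
        rcases hx with rfl | hx
        · rcases hy with rfl | hy
          · exact hne rfl
          · rw [hAdef] at hy
            simp only [Finset.mem_image] at hy
            obtain ⟨t, ht, rfl⟩ := hy
            exact hnac t ht hle
        · rcases hy with rfl | hy
          · rw [hAdef] at hx
            simp only [Finset.mem_image] at hx
            obtain ⟨t, ht, rfl⟩ := hx
            exact hcase t ht hle
          · exact hAac (Finset.mem_coe.mpr hx) (Finset.mem_coe.mpr hy) hne hle
      have hins : insert a A ⊆ s := by
        refine Finset.insert_subset ha ?_
        intro x hx
        simp only [hAdef, Finset.mem_image] at hx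
        obtain ⟨t, ht, rfl⟩ := hx
        exact hs'sub (hAs' t ht)
      have hcardle : c'.card + 1 ≤ wdth s := by
        have := le_wdth hins hiac
        rwa [Finset.card_insert_of_notMem haA, hAcard] at this
      have hnotmem : ({a} : Finset Q) ∉ c' := by
        intro h
        exact has' ((hc'chain _ h).1 (Finset.mem_singleton_self a))
      refine ⟨insert {a} c', ?_, ?_, ?_, ?_⟩
      · rw [Finset.card_insert_of_notMem hnotmem]; omega
      · intro t ht
        rcases Finset.mem_insert.mp ht with rfl | ht
        · exact ⟨Finset.singleton_subset_iff.mpr ha, by simp [IsChain]⟩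
        · exact ⟨(hc'chain t ht).1.trans hs'sub, (hc'chain t ht).2⟩
      · intro x hx
        rcases eq_or_ne x a with rfl | hne
        · exact ⟨{x}, Finset.mem_insert_self _ _, Finset.mem_singleton_self x⟩
        · obtain ⟨t, ht, hxt⟩ := hc'cover x (Finset.mem_erase.mpr ⟨hne, hx⟩)
          exact ⟨t, Finset.mem_insert_of_mem ht, hxt⟩
      · intro t ht t' ht' hne
        rcases Finset.mem_insert.mp ht with rfl | ht
        · rcases Finset.mem_insert.mp ht' with rfl | ht'
          · exact absurd rfl hne
          · exact Finset.disjoint_singleton_left.mpr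
              (fun h => has' ((hc'chain t' ht').1 h))
        · rcases Finset.mem_insert.mp ht' with rfl | ht'
          · exact Finset.disjoint_singleton_right.mpr
              (fun h => has' ((hc'chain t ht).1 h))
          · exact hc'disj t ht t' ht' hne

end Dilworth

section Pairs
variable {V : Type*} {G : V → V → Prop}

def pairW (x y : V) : Fin 2 → V := fun i => if i.1 = 0 then x else y

def tripleW (x y z : V) : Fin 3 → V :=
  fun i => if i.1 = 0 then x else if i.1 = 1 then y else z

lemma pairW_isWalk {x y : V} (h : G x y) : IsWalk G (pairW x y) := by
  intro i hi
  have : i = 0 := by omega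
  subst this
  simpa [pairW] using h

lemma tripleW_isWalk {x y z : V} (hxy : G x y) (hyz : G y z) : IsWalk G (tripleW x y z) := by
  intro i hi
  have h01 : i = 0 ∨ i = 1 := by omega
  rcases h01 with rfl | rfl
  · simpa [tripleW] using hxy
  · simpa [tripleW] using hyz

lemma tripleW_castSucc (x y z : V) :
    (fun i : Fin 2 => tripleW x y z i.castSucc) = pairW x y := by
  funext i
  rcases i with ⟨iv, hiv⟩
  interval_cases iv <;> simp [tripleW, pairW]

lemma tripleW_succ (x y z : V) :
    (fun i : Fin 2 => tripleW x y z i.succ) = pairW y z := by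
  funext i
  rcases i with ⟨iv, hiv⟩
  interval_cases iv <;> simp [tripleW, pairW]

end Pairs

/-- **Edge `P`-colorability of the doubly directed version.** Let `G₂` be the doubly
directed version of a simple graph `G₀` on a finite vertex set (`G₂ u v` iff `u, v` are
adjacent in `G₀`) and let `P` be a finite poset.  The 2-walks (edges) of `G₂` admit a
`P`-coloring iff the chromatic number of `G₀` is at most the maximum size of an antichain
in `A(P)`, the poset of lower sets of `P` ordered by inclusion. -/
theorem doubly_directed_edge_coloring {V : Type*} [Fintype V] (G₀ : SimpleGraph V)
    (P : Type*) [PartialOrder P] [Fintype P] :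
    (∃ c : Walks (fun u v : V => G₀.Adj u v) 2 → P,
        IsPColoring (fun u v : V => G₀.Adj u v) 2 c) ↔
      G₀.chromaticNumber ≤ (posetWidth (LowerSet P) : ℕ∞) := by
  classical
  set G : V → V → Prop := fun u v : V => G₀.Adj u v with hGdef
  haveI : Finite (LowerSet P) := Finite.of_injective _ SetLike.coe_injective
  haveI : Fintype (LowerSet P) := Fintype.ofFinite _
  have hwidth_eq : posetWidth (LowerSet P) = wdth (Finset.univ : Finset (LowerSet P)) := by
    unfold posetWidth wdth
    congr 1
    ext n
    simp [Finset.subset_univ]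
  constructor
  · rintro ⟨c, hc⟩
    -- edge colors
    have key : ∀ {x y z : V} (hxy : G x y) (hyz : G y z),
        ¬ c ⟨pairW x y, pairW_isWalk hxy⟩ ≤ c ⟨pairW y z, pairW_isWalk hyz⟩ := by
      intro x y z hxy hyz
      have h3 := hc ⟨tripleW x y z, tripleW_isWalk hxy hyz⟩
      intro hle
      apply h3
      have eA : c ⟨fun i : Fin 2 => tripleW x y z i.castSucc,
          (tripleW_isWalk (G := G) hxy hyz).walkPrefix⟩ = c ⟨pairW x y, pairW_isWalk hxy⟩ :=
        congrArg c (Subtype.ext (tripleW_castSucc x y z))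
      have eB : c ⟨fun i : Fin 2 => tripleW x y z i.succ,
          (tripleW_isWalk (G := G) hxy hyz).walkSuffix⟩ = c ⟨pairW y z, pairW_isWalk hyz⟩ :=
        congrArg c (Subtype.ext (tripleW_succ x y z))
      exact eA.trans_le (hle.trans_eq eB.symm)
    -- vertex "coloring" by lower sets
    set f : V → LowerSet P := fun v =>
      lowerClosure {p : P | ∃ u, ∃ h : G₀.Adj v u, c ⟨pairW v u, pairW_isWalk h⟩ = p}
      with hfdef
    have hmem : ∀ {v u : V} (h : G₀.Adj v u), c ⟨pairW v u, pairW_isWalk h⟩ ∈ f v := by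
      intro v u h
      exact subset_lowerClosure ⟨u, h, rfl⟩
    have hnmem : ∀ {v u : V} (h : G₀.Adj v u), c ⟨pairW v u, pairW_isWalk h⟩ ∉ f u := by
      intro v u h hin
      rw [hfdef] at hin
      obtain ⟨q, ⟨x, hux, rfl⟩, hle⟩ := mem_lowerClosure.mp hin
      exact key h hux hle
    have hincomp : ∀ {v u : V}, G₀.Adj v u → ¬ f v ≤ f u := by
      intro v u h hle
      exact hnmem h (hle (hmem h))
    -- chain cover of LowerSet P
    obtain ⟨ch, hchcard, hchchain, hchcover, -⟩ :=
      dilworth_aux (Finset.univ : Finset (LowerSet P)).card Finset.univ le_rfl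
    have hcol : ∀ v : V, ∃ t ∈ ch, f v ∈ t := fun v => hchcover (f v) (Finset.mem_univ _)
    choose gc hgc1 hgc2 using hcol
    let C : G₀.Coloring {t // t ∈ ch} := SimpleGraph.Coloring.mk
      (fun v => ⟨gc v, hgc1 v⟩) ?_
    · have hcol' : G₀.Colorable (Fintype.card {t // t ∈ ch}) := C.colorable
      rw [Fintype.card_coe] at hcol'
      have h1 : G₀.chromaticNumber ≤ (ch.card : ℕ∞) := hcol'.chromaticNumber_le
      refine h1.trans ?_
      rw [hwidth_eq]
      exact_mod_cast hchcard
    · intro v u hadj heq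
      have heq' : gc v = gc u := congrArg Subtype.val heq
      have hne : f v ≠ f u := fun h => hincomp hadj (le_of_eq h)
      have := (hchchain (gc v) (hgc1 v)).2 (Finset.mem_coe.mpr (hgc2 v))
        (Finset.mem_coe.mpr (heq' ▸ hgc2 u)) hne
      rcases this with h | h
      · exact hincomp hadj h
      · exact hincomp hadj.symm h
  · intro hchi
    -- get a maximum antichain
    have hbdd : BddAbove {n : ℕ | ∃ s : Finset (LowerSet P),
        IsAntichain (· ≤ ·) (s : Set (LowerSet P)) ∧ s.card = n} :=
      ⟨Fintype.card (LowerSet P), fun n ⟨s, _, hc⟩ => hc ▸ Finset.card_le_univ s⟩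
    have hne : {n : ℕ | ∃ s : Finset (LowerSet P),
        IsAntichain (· ≤ ·) (s : Set (LowerSet P)) ∧ s.card = n}.Nonempty :=
      ⟨0, ∅, by simp [IsAntichain], rfl⟩
    obtain ⟨s, hsac, hscard⟩ : ∃ s : Finset (LowerSet P),
        IsAntichain (· ≤ ·) (s : Set (LowerSet P)) ∧ s.card = posetWidth (LowerSet P) :=
      Nat.sSup_mem hne hbdd
    rw [SimpleGraph.chromaticNumber_le_iff_colorable] at hchi
    obtain ⟨col⟩ := hchi
    set f : V → LowerSet P := fun v => ((s.equivFin.symm (Fin.cast hscard.symm (col v))) :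
      LowerSet P) with hfdef
    have hfs : ∀ v, f v ∈ s := fun v => (s.equivFin.symm _).2
    have hfne : ∀ {v u : V}, G₀.Adj v u → f v ≠ f u := by
      intro v u hadj heq
      have h1 : col v ≠ col u := col.valid hadj
      apply h1
      have := Subtype.ext heq
      have h2 := s.equivFin.symm.injective this
      exact Fin.cast_injective _ h2
    have hfincomp : ∀ {v u : V}, G₀.Adj v u → ¬ f v ≤ f u := by
      intro v u hadj
      exact hsac (Finset.mem_coe.mpr (hfs v)) (Finset.mem_coe.mpr (hfs u)) (hfne hadj)
    have hch : ∀ w : Walks G 2, ∃ p : P,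
        p ∈ f (w.1 ⟨0, by omega⟩) ∧ p ∉ f (w.1 ⟨1, by omega⟩) := by
      intro w
      have hadj : G₀.Adj (w.1 ⟨0, by omega⟩) (w.1 ⟨1, by omega⟩) := w.2 0 (by omega)
      have := hfincomp hadj
      rw [← LowerSet.coe_subset_coe] at this
      obtain ⟨p, hp1, hp2⟩ := Set.not_subset.mp this
      exact ⟨p, hp1, hp2⟩
    refine ⟨fun w => (hch w).choose, ?_⟩
    intro u
    set pw : Walks G 2 := ⟨fun i => u.1 i.castSucc, u.2.walkPrefix⟩ with hpw
    set sw : Walks G 2 := ⟨fun i => u.1 i.succ, u.2.walkSuffix⟩ with hsw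
    intro hle
    have hp := (hch pw).choose_spec
    have hs := (hch sw).choose_spec
    exact hp.2 ((f (sw.1 ⟨0, by omega⟩)).lower' hle hs.1)
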